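/- Let $F,G:[0,T]\to\mathbb{R}$ be continuously differentiable with $F(0)=0$ and $F(t)>0$ for all $t\in(0,T]$. Then for each fixed $t\in(0,T]$, as $\varepsilon\to 0^+$, the integral $N_\varepsilon(t)=\int_0^t \exp\left(-\frac{1}{\varepsilon}\int_s^t F(v)\,dv\right) G(s)\,ds$ satisfies $N_\varepsilon(t) = \varepsilon \frac{G(t)}{F(t)}(1+O(\varepsilon))$, i.e., there exist constants $C>0$ and $\varepsilon_0>0$ such that $|N_\varepsilon(t) - \varepsilon G(t)/F(t)| \le C\varepsilon^2$ for all $0<\varepsilon\le\varepsilon_0$. -/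

import Mathlib

open Real Set

set_option maxHeartbeats 1600000 in
/-- Laplace-type asymptotics: `N_ε(t) = ε G(t)/F(t) (1 + O(ε))` as `ε → 0⁺`. -/
theorem laplace_asymptotics (T : ℝ) (hT : 0 < T) (F G : ℝ → ℝ)
    (hF : ContDiffOn ℝ 1 F (Icc 0 T)) (hG : ContDiffOn ℝ 1 G (Icc 0 T))
    (hF0 : F 0 = 0) (hFpos : ∀ s ∈ Ioc (0:ℝ) T, 0 < F s)
    (t : ℝ) (ht : t ∈ Ioc (0:ℝ) T) :
    ∃ C > (0:ℝ), ∃ ε0 > (0:ℝ), ∀ ε : ℝ, 0 < ε → ε ≤ ε0 →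
      |(∫ s in (0:ℝ)..t, Real.exp (-(1/ε) * ∫ v in s..t, F v) * G s)
        - ε * G t / F t| ≤ C * ε ^ 2 := by
  obtain ⟨ht0, htT⟩ := ht
  set δ : ℝ := t/2 with hδdef
  have hδ0 : 0 < δ := by positivity
  have hδt : δ < t := by linarith
  have hFc : ContinuousOn F (Icc 0 T) := hF.continuousOn
  have hGc : ContinuousOn G (Icc 0 T) := hG.continuousOn
  have hFnonneg : ∀ s ∈ Icc (0:ℝ) T, 0 ≤ F s := by
    intro s hs
    rcases eq_or_lt_of_le hs.1 with h | h
    · simp [← h, hF0]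
    · exact (hFpos s ⟨h, hs.2⟩).le
  obtain ⟨s₀, hs₀, hmin⟩ := isCompact_Icc.exists_isMinOn (nonempty_Icc.2 hδt.le)
      (hFc.mono (Icc_subset_Icc hδ0.le htT))
  set m := F s₀ with hmdef
  have hm0 : 0 < m := hFpos s₀ ⟨lt_of_lt_of_le hδ0 hs₀.1, le_trans hs₀.2 htT⟩
  have hmF : ∀ s ∈ Icc δ t, m ≤ F s := fun s hs => hmin hs
  have hsubI : Icc δ t ⊆ Icc (0:ℝ) T := Icc_subset_Icc hδ0.le htT
  have hFne : ∀ s ∈ Icc δ t, F s ≠ 0 := fun s hs => (lt_of_lt_of_le hm0 (hmF s hs)).ne'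
  -- bounds for `G`, `F` and the derivatives
  obtain ⟨KG, hKG⟩ := isCompact_Icc.exists_bound_of_continuousOn hGc
  obtain ⟨KF, hKF⟩ := isCompact_Icc.exists_bound_of_continuousOn hFc
  set f' := derivWithin F (Icc 0 T) with hf'def
  set g' := derivWithin G (Icc 0 T) with hg'def
  have hf'c : ContinuousOn f' (Icc 0 T) :=
    hF.continuousOn_derivWithin (uniqueDiffOn_Icc hT) le_rfl
  have hg'c : ContinuousOn g' (Icc 0 T) :=
    hG.continuousOn_derivWithin (uniqueDiffOn_Icc hT) le_rfl
  obtain ⟨Kf, hKf⟩ := isCompact_Icc.exists_bound_of_continuousOn hf'c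
  obtain ⟨Kg, hKg⟩ := isCompact_Icc.exists_bound_of_continuousOn hg'c
  have hKG0 : 0 ≤ KG := le_trans (norm_nonneg _) (hKG 0 ⟨le_rfl, hT.le⟩)
  have hKF0 : 0 ≤ KF := le_trans (norm_nonneg _) (hKF 0 ⟨le_rfl, hT.le⟩)
  have hKf0 : 0 ≤ Kf := le_trans (norm_nonneg _) (hKf 0 ⟨le_rfl, hT.le⟩)
  have hKg0 : 0 ≤ Kg := le_trans (norm_nonneg _) (hKg 0 ⟨le_rfl, hT.le⟩)
  -- genuine derivatives on the interior
  have hFd : ∀ s ∈ Ioo (0:ℝ) T, HasDerivAt F (f' s) s := by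
    intro s hs
    exact ((hF.differentiableOn one_ne_zero) s (Ioo_subset_Icc_self hs)).hasDerivWithinAt.hasDerivAt
      (Icc_mem_nhds hs.1 hs.2)
  have hGd : ∀ s ∈ Ioo (0:ℝ) T, HasDerivAt G (g' s) s := by
    intro s hs
    exact ((hG.differentiableOn one_ne_zero) s (Ioo_subset_Icc_self hs)).hasDerivWithinAt.hasDerivAt
      (Icc_mem_nhds hs.1 hs.2)
  -- the phase Φ
  set Φ : ℝ → ℝ := fun s => ∫ v in s..t, F v with hΦdef
  have hsub : Icc (0:ℝ) t ⊆ Icc 0 T := Icc_subset_Icc le_rfl htT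
  have hFct : ContinuousOn F (Icc 0 t) := hFc.mono hsub
  have hFint : ∀ a b, a ∈ Icc (0:ℝ) t → b ∈ Icc (0:ℝ) t → IntervalIntegrable F MeasureTheory.volume a b := by
    intro a b ha hb
    exact (hFct.mono (uIcc_subset_Icc ha hb)).intervalIntegrable
  have hΦcont : ContinuousOn Φ (Icc 0 t) := by
    have := intervalIntegral.continuousOn_primitive_interval_left
      (f := F) (b := t) (a := (0:ℝ)) (μ := MeasureTheory.volume)
      (by rw [uIcc_of_le ht0.le]; exact hFct.integrableOn_Icc)
    rwa [uIcc_of_le ht0.le] at this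
  have hΦd : ∀ s ∈ Ioo (0:ℝ) t, HasDerivAt Φ (-(F s)) s := by
    intro s hs
    have hsT : s ∈ Ioo (0:ℝ) T := ⟨hs.1, lt_of_lt_of_le hs.2 htT⟩
    have hco : ContinuousOn F (Ioo 0 T) := hFc.mono Ioo_subset_Icc_self
    exact intervalIntegral.integral_hasDerivAt_left
      (hFint s t ⟨hs.1.le, hs.2.le⟩ ⟨ht0.le, le_rfl⟩)
      (hco.stronglyMeasurableAtFilter isOpen_Ioo s hsT)
      (hco.continuousAt (isOpen_Ioo.mem_nhds hsT))
  have hΦt : Φ t = 0 := by simp [hΦdef]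
  have hΦnonneg : ∀ s ∈ Icc (0:ℝ) t, 0 ≤ Φ s := by
    intro s hs
    exact intervalIntegral.integral_nonneg hs.2
      (fun v hv => hFnonneg v ⟨le_trans hs.1 hv.1, le_trans hv.2 htT⟩)
  -- the constant c = Φ δ > 0
  set c := Φ δ with hcdef
  have hc_ge : m * (t - δ) ≤ c := by
    have h1 : (∫ v in δ..t, (m:ℝ)) ≤ ∫ v in δ..t, F v := by
      apply intervalIntegral.integral_mono_on hδt.le intervalIntegrable_const
        (hFint δ t ⟨hδ0.le, hδt.le⟩ ⟨ht0.le, le_rfl⟩)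
      intro s hs
      exact hmF s hs
    have hceq : c = ∫ v in δ..t, F v := rfl
    rw [hceq]
    simp at h1
    linarith
  have hc0 : 0 < c := lt_of_lt_of_le (by nlinarith) hc_ge
  have hΦ_ge_c : ∀ s ∈ Icc (0:ℝ) δ, c ≤ Φ s := by
    intro s hs
    have hsplit : (∫ v in s..δ, F v) + (∫ v in δ..t, F v) = ∫ v in s..t, F v :=
      intervalIntegral.integral_add_adjacent_intervals
        (hFint s δ ⟨hs.1, le_trans hs.2 hδt.le⟩ ⟨hδ0.le, hδt.le⟩)
        (hFint δ t ⟨hδ0.le, hδt.le⟩ ⟨ht0.le, le_rfl⟩)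
    have hnn : 0 ≤ ∫ v in s..δ, F v :=
      intervalIntegral.integral_nonneg hs.2
        (fun v hv => hFnonneg v ⟨le_trans hs.1 hv.1, le_trans hv.2 (le_trans hδt.le htT)⟩)
    have : Φ s = (∫ v in s..δ, F v) + c := by rw [hcdef, hΦdef]; exact hsplit.symm
    linarith
  have hΦ_ge_lin : ∀ s ∈ Icc δ t, m * (t - s) ≤ Φ s := by
    intro s hs
    have h1 : (∫ v in s..t, (m:ℝ)) ≤ ∫ v in s..t, F v := by
      apply intervalIntegral.integral_mono_on hs.2 intervalIntegrable_const
        (hFint s t ⟨le_trans hδ0.le hs.1, hs.2⟩ ⟨ht0.le, le_rfl⟩)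
      intro v hv
      exact hmF v ⟨le_trans hs.1 hv.1, hv.2⟩
    have hΦeq : Φ s = ∫ v in s..t, F v := rfl
    rw [hΦeq]
    simp at h1
    linarith
  -- the derivative bound constant
  set M := (Kg * KF + KG * Kf) / m ^ 2 with hMdef
  have hM0 : 0 ≤ M := by positivity
  set Hd : ℝ → ℝ := fun s => (g' s * F s - G s * f' s) / (F s) ^ 2 with hHddef
  have hHdbound : ∀ s ∈ Icc δ t, |Hd s| ≤ M := by
    intro s hs
    have hsT := hsubI hs
    have hnum : |g' s * F s - G s * f' s| ≤ Kg * KF + KG * Kf := by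
      calc |g' s * F s - G s * f' s| ≤ |g' s * F s| + |G s * f' s| := abs_sub _ _
        _ ≤ Kg * KF + KG * Kf := by
            rw [abs_mul, abs_mul]
            gcongr
            · exact hKg s hsT
            · exact hKF s hsT
            · exact hKG s hsT
            · exact hKf s hsT
    have hden : m ^ 2 ≤ (F s) ^ 2 := by
      have := hmF s hs
      nlinarith
    rw [hHddef]
    simp only
    rw [abs_div, abs_pow, sq_abs]
    exact div_le_div₀ (by positivity) hnum (by positivity) hden
  have hHdcont : ContinuousOn Hd (Icc δ t) := by
    apply ContinuousOn.div
    · exact ((hg'c.mono hsubI).mul (hFc.mono hsubI)).sub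
        ((hGc.mono hsubI).mul (hf'c.mono hsubI))
    · exact (hFc.mono hsubI).pow 2
    · intro s hs
      exact pow_ne_zero _ (hFne s hs)
  -- main estimate for each ε
  refine ⟨4 * KG * δ / c ^ 2 + 4 * KG / (m * c ^ 2) + M / m + 1, by positivity, 1, one_pos, ?_⟩
  intro ε hε hε1
  set u : ℝ → ℝ := fun s => Real.exp (-(1/ε) * Φ s) with hudef
  have hupos : ∀ s, 0 < u s := fun s => Real.exp_pos _
  have hucont : ContinuousOn u (Icc 0 t) :=
    Real.continuous_exp.comp_continuousOn (continuousOn_const.mul hΦcont)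
  have hucontδ : ContinuousOn u (Icc δ t) :=
    hucont.mono (Icc_subset_Icc hδ0.le le_rfl)
  have hut : u t = 1 := by rw [hudef]; simp [hΦt]
  have hud : ∀ s ∈ Ioo δ t, HasDerivAt u (F s / ε * u s) s := by
    intro s hs
    have hs' : s ∈ Ioo (0:ℝ) t := ⟨lt_trans hδ0 hs.1, hs.2⟩
    have h1 : HasDerivAt (fun x => -(1/ε) * Φ x) (-(1/ε) * -(F s)) s :=
      (hΦd s hs').const_mul _
    have h2 := h1.exp
    convert h2 using 1
    rw [hudef]
    field_simp
  -- the function ψ and its derivative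
  set ψ : ℝ → ℝ := fun s => ε * (u s * (G s / F s)) with hψdef
  set D : ℝ → ℝ := fun s => u s * G s + ε * (u s * Hd s) with hDdef
  have hψd : ∀ s ∈ Ioo δ t, HasDerivAt ψ (D s) s := by
    intro s hs
    have hsmem : s ∈ Icc δ t := Ioo_subset_Icc_self hs
    have hsT : s ∈ Ioo (0:ℝ) T :=
      ⟨lt_trans hδ0 hs.1, lt_of_lt_of_le hs.2 htT⟩
    have hne : F s ≠ 0 := hFne s hsmem
    have hH : HasDerivAt (fun x => G x / F x) (Hd s) s := by
      have := (hGd s hsT).div (hFd s hsT) hne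
      exact this
    have := ((hud s hs).mul hH).const_mul ε
    refine this.congr_deriv ?_
    symm
    have hεne : ε ≠ 0 := hε.ne'
    show u s * G s + ε * (u s * Hd s) = ε * (F s / ε * u s * (G s / F s) + u s * Hd s)
    rw [mul_add]
    congr 1
    field_simp
  have hψcont : ContinuousOn ψ (Icc δ t) := by
    apply continuousOn_const.mul
    apply hucontδ.mul
    exact ((hGc.mono hsubI).div (hFc.mono hsubI) hFne)
  have huGcont : ContinuousOn (fun s => u s * G s) (Icc 0 t) :=
    hucont.mul (hGc.mono hsub)
  have hDcont : ContinuousOn D (Icc δ t) := by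
    apply ContinuousOn.add
    · exact (huGcont.mono (Icc_subset_Icc hδ0.le le_rfl))
    · exact continuousOn_const.mul (hucontδ.mul hHdcont)
  have hDint : IntervalIntegrable D MeasureTheory.volume δ t :=
    (hDcont.mono (by rw [uIcc_of_le hδt.le])).intervalIntegrable
  have hFTC : ∫ s in δ..t, D s = ψ t - ψ δ :=
    intervalIntegral.integral_eq_sub_of_hasDerivAt_of_le hδt.le hψcont hψd hDint
  -- split ∫ D
  have huGint : ∀ a b, a ∈ Icc (0:ℝ) t → b ∈ Icc (0:ℝ) t →
      IntervalIntegrable (fun s => u s * G s) MeasureTheory.volume a b := by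
    intro a b ha hb
    exact (huGcont.mono (uIcc_subset_Icc ha hb)).intervalIntegrable
  have huHdint : IntervalIntegrable (fun s => u s * Hd s) MeasureTheory.volume δ t :=
    ((hucontδ.mul hHdcont).mono (by rw [uIcc_of_le hδt.le])).intervalIntegrable
  have hsplitD : (∫ s in δ..t, D s)
      = (∫ s in δ..t, u s * G s) + ε * ∫ s in δ..t, u s * Hd s := by
    rw [hDdef]
    rw [intervalIntegral.integral_add
      (huGint δ t ⟨hδ0.le, hδt.le⟩ ⟨ht0.le, le_rfl⟩)
      (huHdint.const_mul ε)]
    rw [intervalIntegral.integral_const_mul]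
  have hψt : ψ t = ε * (G t / F t) := by
    rw [hψdef]; simp [hut]
  -- the main identity
  have hmain : (∫ s in (0:ℝ)..t, u s * G s) - ε * G t / F t
      = (∫ s in (0:ℝ)..δ, u s * G s) - ψ δ - ε * ∫ s in δ..t, u s * Hd s := by
    have hadj : (∫ s in (0:ℝ)..δ, u s * G s) + (∫ s in δ..t, u s * G s)
        = ∫ s in (0:ℝ)..t, u s * G s :=
      intervalIntegral.integral_add_adjacent_intervals
        (huGint 0 δ ⟨le_rfl, ht0.le⟩ ⟨hδ0.le, hδt.le⟩)
        (huGint δ t ⟨hδ0.le, hδt.le⟩ ⟨ht0.le, le_rfl⟩)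
    have h2 : (∫ s in δ..t, u s * G s) = ε * (G t / F t) - ψ δ
        - ε * ∫ s in δ..t, u s * Hd s := by
      rw [← hψt]
      linarith [hFTC, hsplitD]
    rw [← hadj, h2]
    ring
  -- the exponential bound
  set eb := Real.exp (-(1/ε) * c) with hebdef
  have heb_pos : 0 < eb := Real.exp_pos _
  have heb : eb ≤ 4 * ε ^ 2 / c ^ 2 := by
    have h1 : c / (2 * ε) ≤ Real.exp (c / (2 * ε)) :=
      le_trans (by linarith [Real.add_one_le_exp (c / (2*ε))]) le_rfl
    have h2 : Real.exp (c / ε) = Real.exp (c / (2 * ε)) ^ 2 := by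
      rw [sq, ← Real.exp_add]
      congr 1
      field_simp
      ring
    have h3 : c ^ 2 / (4 * ε ^ 2) ≤ Real.exp (c / ε) := by
      rw [h2]
      have hq : (c / (2 * ε)) ^ 2 = c ^ 2 / (4 * ε ^ 2) := by
        field_simp; ring
      rw [← hq]
      have h0 : 0 ≤ c / (2 * ε) := by positivity
      exact pow_le_pow_left₀ h0 h1 2
    have hebeq : eb = (Real.exp (c / ε))⁻¹ := by
      rw [hebdef, ← Real.exp_neg]
      congr 1
      field_simp
    have h4 : (0:ℝ) < 4 * ε ^ 2 / c ^ 2 := by positivity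
    rw [hebeq, inv_le_comm₀ (Real.exp_pos _) h4]
    have h5 : (4 * ε ^ 2 / c ^ 2)⁻¹ = c ^ 2 / (4 * ε ^ 2) := by
      rw [inv_div]
    rw [h5]
    exact h3
  -- bound on u for s ≤ δ
  have hu_small : ∀ s ∈ Icc (0:ℝ) δ, u s ≤ eb := by
    intro s hs
    rw [hudef, hebdef]
    apply Real.exp_le_exp.2
    have h1 : c ≤ Φ s := hΦ_ge_c s hs
    have h2 : (0:ℝ) < 1/ε := by positivity
    have h3 := mul_le_mul_of_nonneg_left h1 h2.le
    linarith
  -- (a) bound on ∫_0^δ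
  have hA : |∫ s in (0:ℝ)..δ, u s * G s| ≤ KG * eb * δ := by
    have : ‖∫ s in (0:ℝ)..δ, u s * G s‖ ≤ KG * eb * |δ - 0| := by
      apply intervalIntegral.norm_integral_le_of_norm_le_const
      intro s hs
      rw [uIoc_of_le hδ0.le] at hs
      have hs' : s ∈ Icc (0:ℝ) δ := ⟨hs.1.le, hs.2⟩
      have h1 : ‖u s * G s‖ = u s * |G s| := by
        rw [norm_mul, Real.norm_eq_abs, Real.norm_eq_abs, abs_of_pos (hupos s)]
      rw [h1]
      calc u s * |G s| ≤ eb * KG := by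
            apply mul_le_mul (hu_small s hs') (hKG s (hsub ⟨hs.1.le, le_trans hs.2 hδt.le⟩))
              (abs_nonneg _) heb_pos.le
        _ = KG * eb := by ring
    rw [sub_zero, abs_of_pos hδ0] at this
    calc |∫ s in (0:ℝ)..δ, u s * G s| = ‖∫ s in (0:ℝ)..δ, u s * G s‖ := rfl
      _ ≤ KG * eb * δ := this
  -- (b) bound on ψ δ
  have hB : |ψ δ| ≤ ε * (eb * (KG / m)) := by
    rw [hψdef]
    simp only
    rw [abs_mul, abs_mul, abs_of_pos hε, abs_of_pos (hupos δ)]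
    apply mul_le_mul_of_nonneg_left _ hε.le
    have hδmem : δ ∈ Icc δ t := ⟨le_rfl, hδt.le⟩
    have h1 : |G δ / F δ| ≤ KG / m := by
      rw [abs_div, abs_of_pos (lt_of_lt_of_le hm0 (hmF δ hδmem))]
      exact div_le_div₀ hKG0 (hKG δ (hsubI hδmem)) hm0 (hmF δ hδmem)
    apply mul_le_mul (hu_small δ ⟨hδ0.le, le_rfl⟩) h1 (abs_nonneg _) heb_pos.le
  -- (c) bound on ∫_δ^t u
  have hJ : (∫ s in δ..t, u s) ≤ ε / m := by
    have hFu : ∫ s in δ..t, F s / ε * u s = u t - u δ := by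
      apply intervalIntegral.integral_eq_sub_of_hasDerivAt_of_le hδt.le hucontδ hud
      apply ContinuousOn.intervalIntegrable
      rw [uIcc_of_le hδt.le]
      exact ((hFc.mono hsubI).div_const ε).mul hucontδ
    have huint : IntervalIntegrable u MeasureTheory.volume δ t :=
      (hucontδ.mono (by rw [uIcc_of_le hδt.le])).intervalIntegrable
    have hmono : (∫ s in δ..t, m / ε * u s) ≤ ∫ s in δ..t, F s / ε * u s := by
      apply intervalIntegral.integral_mono_on hδt.le (huint.const_mul _)
      · apply ContinuousOn.intervalIntegrable
        rw [uIcc_of_le hδt.le]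
        exact ((hFc.mono hsubI).div_const ε).mul hucontδ
      · intro s hs
        apply mul_le_mul_of_nonneg_right _ (hupos s).le
        exact (div_le_div_iff_of_pos_right hε).2 (hmF s hs)
    have hconst : (∫ s in δ..t, m / ε * u s) = m / ε * ∫ s in δ..t, u s := by
      rw [intervalIntegral.integral_const_mul]
    have hub : u t - u δ ≤ 1 := by
      rw [hut]; linarith [hupos δ]
    have : m / ε * (∫ s in δ..t, u s) ≤ 1 := by
      rw [← hconst]; linarith [hmono, hFu]
    rw [le_div_iff₀ hm0]
    calc (∫ s in δ..t, u s) * m = (m / ε * ∫ s in δ..t, u s) * ε := by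
          field_simp
      _ ≤ 1 * ε := mul_le_mul_of_nonneg_right this hε.le
      _ = ε := one_mul ε
  have hJ0 : 0 ≤ ∫ s in δ..t, u s :=
    intervalIntegral.integral_nonneg hδt.le (fun s _ => (hupos s).le)
  -- (d) bound on ∫_δ^t u Hd
  have hI : |∫ s in δ..t, u s * Hd s| ≤ M * (ε / m) := by
    have h1 : |∫ s in δ..t, u s * Hd s| ≤ ∫ s in δ..t, |u s * Hd s| := by
      exact intervalIntegral.abs_integral_le_integral_abs (μ := MeasureTheory.volume)
        (f := fun s => u s * Hd s) (a := δ) (b := t) hδt.le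
    have h2 : (∫ s in δ..t, |u s * Hd s|) ≤ ∫ s in δ..t, M * u s := by
      apply intervalIntegral.integral_mono_on hδt.le
      · apply ContinuousOn.intervalIntegrable
        rw [uIcc_of_le hδt.le]
        exact (hucontδ.mul hHdcont).abs
      · apply ContinuousOn.intervalIntegrable
        rw [uIcc_of_le hδt.le]
        exact continuousOn_const.mul hucontδ
      · intro s hs
        rw [abs_mul, abs_of_pos (hupos s)]
        calc u s * |Hd s| ≤ u s * M :=
              mul_le_mul_of_nonneg_left (hHdbound s hs) (hupos s).le
          _ = M * u s := by ring
    have h3 : (∫ s in δ..t, M * u s) = M * ∫ s in δ..t, u s := by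
      rw [intervalIntegral.integral_const_mul]
    calc |∫ s in δ..t, u s * Hd s| ≤ ∫ s in δ..t, M * u s := le_trans h1 h2
      _ = M * ∫ s in δ..t, u s := h3
      _ ≤ M * (ε / m) := mul_le_mul_of_nonneg_left hJ hM0
  -- put everything together
  have hgoal : (∫ s in (0:ℝ)..t, Real.exp (-(1/ε) * ∫ v in s..t, F v) * G s)
      = ∫ s in (0:ℝ)..t, u s * G s := rfl
  rw [hgoal, hmain]
  have habs : |(∫ s in (0:ℝ)..δ, u s * G s) - ψ δ - ε * ∫ s in δ..t, u s * Hd s|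
      ≤ |∫ s in (0:ℝ)..δ, u s * G s| + |ψ δ| + ε * |∫ s in δ..t, u s * Hd s| := by
    calc |(∫ s in (0:ℝ)..δ, u s * G s) - ψ δ - ε * ∫ s in δ..t, u s * Hd s|
        ≤ |(∫ s in (0:ℝ)..δ, u s * G s) - ψ δ| + |ε * ∫ s in δ..t, u s * Hd s| :=
          abs_sub _ _
      _ ≤ |∫ s in (0:ℝ)..δ, u s * G s| + |ψ δ| + ε * |∫ s in δ..t, u s * Hd s| := by
          rw [abs_mul, abs_of_pos hε]
          linarith [abs_sub (∫ s in (0:ℝ)..δ, u s * G s) (ψ δ)]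
  have hfin : |∫ s in (0:ℝ)..δ, u s * G s| + |ψ δ| + ε * |∫ s in δ..t, u s * Hd s|
      ≤ (4 * KG * δ / c ^ 2 + 4 * KG / (m * c ^ 2) + M / m + 1) * ε ^ 2 := by
    have e1 : KG * eb * δ ≤ 4 * KG * δ / c ^ 2 * ε ^ 2 := by
      have h1 : KG * eb ≤ KG * (4 * ε ^ 2 / c ^ 2) := mul_le_mul_of_nonneg_left heb hKG0
      calc KG * eb * δ ≤ KG * (4 * ε ^ 2 / c ^ 2) * δ :=
            mul_le_mul_of_nonneg_right h1 hδ0.le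
        _ = 4 * KG * δ / c ^ 2 * ε ^ 2 := by field_simp
    have e2 : ε * (eb * (KG / m)) ≤ 4 * KG / (m * c ^ 2) * ε ^ 2 := by
      have h1 : eb * (KG / m) ≤ (4 * ε ^ 2 / c ^ 2) * (KG / m) :=
        mul_le_mul_of_nonneg_right heb (by positivity)
      calc ε * (eb * (KG / m)) ≤ 1 * ((4 * ε ^ 2 / c ^ 2) * (KG / m)) := by
            apply mul_le_mul hε1 h1 (mul_nonneg heb_pos.le (by positivity)) zero_le_one
        _ = 4 * KG / (m * c ^ 2) * ε ^ 2 := by field_simp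
    have e3 : ε * (M * (ε / m)) = M / m * ε ^ 2 := by field_simp
    have e4 : ε * |∫ s in δ..t, u s * Hd s| ≤ ε * (M * (ε / m)) :=
      mul_le_mul_of_nonneg_left hI hε.le
    have e5 : (0:ℝ) ≤ ε ^ 2 := sq_nonneg ε
    linarith [hA, hB]
  calc |(∫ s in (0:ℝ)..δ, u s * G s) - ψ δ - ε * ∫ s in δ..t, u s * Hd s|
      ≤ |∫ s in (0:ℝ)..δ, u s * G s| + |ψ δ| + ε * |∫ s in δ..t, u s * Hd s| := habs
    _ ≤ (4 * KG * δ / c ^ 2 + 4 * KG / (m * c ^ 2) + M / m + 1) * ε ^ 2 := hfin
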